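/- A Hausdorff locally convex space E over ℝ is Mackey-complete if and only if, for every Mackey-Cauchy sequence (x_n) in E, the closed absolutely convex hull of the set {x_n : n ∈ ℕ} is a complete subset of E. -/

import Mathlib

open Filter Topology Set Bornology Pointwise

/-- A sequence in a locally convex space is *Mackey-Cauchy* if there are a bounded
absolutely convex set `B` and a double sequence of nonnegative reals `c` tending to `0`
such that `x n - x m ∈ c n m • B` for all `n, m`. -/
def MackeyCauchy (E : Type*) [AddCommGroup E] [Module ℝ E] [TopologicalSpace E]
    (x : ℕ → E) : Prop :=
  ∃ (B : Set E) (c : ℕ → ℕ → ℝ),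
    IsVonNBounded ℝ B ∧ Convex ℝ B ∧ Balanced ℝ B ∧
    (∀ n m, 0 ≤ c n m) ∧
    Tendsto (fun p : ℕ × ℕ => c p.1 p.2) atTop (𝓝 (0 : ℝ)) ∧
    ∀ n m, x n - x m ∈ c n m • B

/-- A locally convex space is *Mackey-complete* if every Mackey-Cauchy sequence converges. -/
def MackeyComplete (E : Type*) [AddCommGroup E] [Module ℝ E] [TopologicalSpace E] : Prop :=
  ∀ x : ℕ → E, MackeyCauchy E x → ∃ l : E, Tendsto x atTop (𝓝 l)

/-- A locally convex space is *k-quasi-complete* if the closed absolutely convex hull of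
every compact set is compact. -/
def KQuasiComplete (E : Type*) [AddCommGroup E] [Module ℝ E] [TopologicalSpace E] : Prop :=
  ∀ K : Set E, IsCompact K → IsCompact (closure (convexHull ℝ (balancedHull ℝ K)))

section AuxMackey
set_option linter.unusedSectionVars false


variable {E : Type*} [AddCommGroup E] [Module ℝ E]

lemma auxSumMem {B : Set E} (hconv : Convex ℝ B) (hbal : Balanced ℝ B) (h0 : (0:E) ∈ B)
    {ι : Type*} (F : Finset ι) (a : ι → ℝ) (b : ι → E) (hb : ∀ i ∈ F, b i ∈ B)
    {c : ℝ} (hc : ∑ i ∈ F, |a i| ≤ c) :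
    (∑ i ∈ F, a i • b i) ∈ c • B := by
  classical
  have key : ∀ (G : Finset ι), (∀ i ∈ G, b i ∈ B) →
      (∑ i ∈ G, a i • b i) ∈ (∑ i ∈ G, |a i|) • B := by
    intro G
    induction G using Finset.induction_on with
    | empty =>
      intro _
      simp only [Finset.sum_empty]
      rw [zero_smul_set ⟨0, h0⟩]
      exact Set.zero_mem_zero
    | @insert i G hiG ih =>
      intro hmemG
      rw [Finset.sum_insert hiG, Finset.sum_insert hiG,
        hconv.add_smul (abs_nonneg (a i)) (Finset.sum_nonneg fun j _ => abs_nonneg (a j))]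
      refine Set.add_mem_add ?_ (ih fun j hj => hmemG j (Finset.mem_insert_of_mem hj))
      rcases eq_or_ne (a i) 0 with h | h
      · simp only [h, abs_zero, zero_smul]
        rw [zero_smul_set ⟨0, h0⟩]
        exact Set.zero_mem_zero
      · have h1 : ((|a i|)⁻¹ * a i) • b i ∈ B := by
          apply hbal.smul_mem ?_ (hmemG i (Finset.mem_insert_self i G))
          rw [Real.norm_eq_abs, abs_mul, abs_inv, abs_abs,
            inv_mul_cancel₀ (abs_ne_zero.2 h)]
        have h2 := Set.smul_mem_smul_set (a := |a i|) h1
        rwa [smul_smul, ← mul_assoc, mul_inv_cancel₀ (abs_ne_zero.2 h), one_mul] at h2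
  have h2 := key F hb
  have hsub : (∑ i ∈ F, |a i|) • B ⊆ c • B := by
    apply hbal.smul_mono
    rw [Real.norm_eq_abs, Real.norm_eq_abs,
      abs_of_nonneg (Finset.sum_nonneg fun j _ => abs_nonneg (a j)),
      abs_of_nonneg (le_trans (Finset.sum_nonneg fun j _ => abs_nonneg (a j)) hc)]
    exact hc
  exact hsub h2

lemma auxEv {c : ℕ → ℕ → ℝ} (hcto : Tendsto (fun p : ℕ × ℕ => c p.1 p.2) atTop (𝓝 (0:ℝ))) :
    ∀ ε : ℝ, 0 < ε → ∃ N : ℕ, ∀ n ≥ N, ∀ m ≥ N, c n m < ε := by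
  intro ε hε
  have h : ∀ᶠ p : ℕ × ℕ in atTop, c p.1 p.2 < ε := hcto.eventually_lt_const hε
  rw [eventually_atTop] at h
  obtain ⟨p₀, hp₀⟩ := h
  exact ⟨max p₀.1 p₀.2, fun n hn m hm =>
    hp₀ (n, m) (Prod.le_def.2 ⟨le_trans (le_max_left _ _) hn, le_trans (le_max_right _ _) hm⟩)⟩

lemma tendstoMinAux : Tendsto (fun p : ℕ × ℕ => min p.1 p.2) atTop atTop := by
  rw [tendsto_atTop]
  intro b
  rw [eventually_atTop]
  exact ⟨(b, b), fun p hp => le_min hp.1 hp.2⟩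

variable [UniformSpace E] [IsUniformAddGroup E] [ContinuousSMul ℝ E] [LocallyConvexSpace ℝ E]

lemma auxBddHull {s : Set E} (hs : IsVonNBounded ℝ s) :
    IsVonNBounded ℝ (closure (convexHull ℝ (balancedHull ℝ s))) := by
  intro V hV
  obtain ⟨V₁, ⟨hV₁, hV₁c⟩, hV₁V⟩ := (closed_nhds_basis (0:E)).mem_iff.1 hV
  obtain ⟨W, ⟨hWmem, hWbal, hWconv⟩, hWV⟩ := (nhds_hasBasis_absConvex ℝ E).mem_iff.1 hV₁
  rw [absorbs_iff_norm]
  obtain ⟨r, hr⟩ := absorbs_iff_norm.1 (hs hWmem)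
  refine ⟨max r 1, fun a ha => ?_⟩
  have ha1 : (1:ℝ) ≤ ‖a‖ := le_trans (le_max_right _ _) ha
  have ha0 : a ≠ 0 := by
    intro h; rw [h, norm_zero] at ha1; linarith
  have h1 : s ⊆ a • W := hr a (le_trans (le_max_left _ _) ha)
  have h2 : balancedHull ℝ s ⊆ a • W := (hWbal.smul a).balancedHull_subset_of_subset h1
  have h3 : convexHull ℝ (balancedHull ℝ s) ⊆ a • W := convexHull_min h2 (hWconv.smul a)
  refine (closure_mono h3).trans ?_
  rw [closure_smul₀' ha0]
  exact Set.smul_set_mono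
    ((closure_mono hWV).trans (le_of_eq hV₁c.closure_eq) |>.trans hV₁V)


variable [T2Space E]

lemma auxCauchySeq (x : ℕ → E) (hx : MackeyCauchy E x) : CauchySeq x := by
  obtain ⟨B, c, hBb, _, _, hc0, hcto, hmem⟩ := hx
  rw [cauchySeq_iff_tendsto, uniformity_eq_comap_nhds_zero E, tendsto_comap_iff]
  apply (nhds_basis_balanced ℝ E).tendsto_right_iff.2
  rintro V ⟨hVmem, hVbal⟩
  obtain ⟨r, hr⟩ := absorbs_iff_norm.1 (hBb hVmem)
  set a : ℝ := max r 1 with ha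
  have ha0 : (0:ℝ) < a := lt_of_lt_of_le one_pos (le_max_right _ _)
  have hBV : B ⊆ a • V := hr a (by rw [Real.norm_eq_abs, abs_of_pos ha0]; exact le_max_left _ _)
  obtain ⟨N, hN⟩ := auxEv hcto a⁻¹ (by positivity)
  rw [eventually_atTop]
  refine ⟨(N, N), fun p hp => ?_⟩
  have h1 : x p.2 - x p.1 ∈ c p.2 p.1 • B := hmem p.2 p.1
  have h2 : c p.2 p.1 • B ⊆ (c p.2 p.1 * a) • V := by
    intro z hz
    obtain ⟨w, hw, rfl⟩ := hz
    obtain ⟨v, hv, rfl⟩ := hBV hw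
    exact ⟨v, hv, by simp [smul_smul]⟩
  have h3 : (c p.2 p.1 * a) • V ⊆ V := by
    have hle : ‖c p.2 p.1 * a‖ ≤ ‖(1:ℝ)‖ := by
      rw [Real.norm_eq_abs, norm_one, abs_of_nonneg (mul_nonneg (hc0 _ _) ha0.le)]
      calc c p.2 p.1 * a ≤ a⁻¹ * a :=
        mul_le_mul_of_nonneg_right (hN p.2 hp.2 p.1 hp.1).le ha0.le
        _ = 1 := inv_mul_cancel₀ ha0.ne'
    have := hVbal.smul_mono hle
    rwa [one_smul] at this
  exact h3 (h2 h1)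

lemma auxBackward
    (h : IsComplete (closure (convexHull ℝ (balancedHull ℝ (Set.range x)))))
    (hx : MackeyCauchy E x) : ∃ l : E, Tendsto x atTop (𝓝 l) := by
  have hcs : CauchySeq x := auxCauchySeq x hx
  have hxC : ∀ n, x n ∈ closure (convexHull ℝ (balancedHull ℝ (Set.range x))) := fun n =>
    subset_closure (subset_convexHull ℝ _ (subset_balancedHull ℝ ⟨n, rfl⟩))
  obtain ⟨l, _, hl⟩ := h (map x atTop) hcs
    (le_principal_iff.2 (Filter.mem_map.2 (Filter.Eventually.of_forall hxC)))
  exact ⟨l, hl⟩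

set_option maxHeartbeats 1000000 in
lemma auxForward (hMC : MackeyComplete E) (x : ℕ → E) (hx : MackeyCauchy E x) :
    IsCompact (closure (convexHull ℝ (balancedHull ℝ (Set.range x)))) := by
  classical
  obtain ⟨B, c, hBb, hBconv, hBbal, hc0, hcto, hmem⟩ := hx
  obtain ⟨l, hl⟩ := hMC x ⟨B, c, hBb, hBconv, hBbal, hc0, hcto, hmem⟩
  set y : ℕ → E := fun n => x n - l with hy
  set B₂ : Set E := closure (convexHull ℝ (balancedHull ℝ (B ∪ Set.range y))) with hB₂
  have hB₂cl : IsClosed B₂ := isClosed_closure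
  have hB₂conv : Convex ℝ B₂ := (convex_convexHull ℝ _).closure
  have hB₂bal : Balanced ℝ B₂ := ((balancedHull.balanced _).convexHull).closure
  have hytend : Tendsto y atTop (𝓝 0) := by
    have := hl.sub_const l
    simpa using this
  have hyBdd : IsVonNBounded ℝ (Set.range y) :=
    ((hytend.isCompact_insert_range.totallyBounded).isVonNBounded ℝ).subset
      (subset_insert _ _)
  have hB₂bdd : IsVonNBounded ℝ B₂ := auxBddHull (hBb.union hyBdd)
  have hyB₂ : ∀ n, y n ∈ B₂ := fun n =>
    subset_closure (subset_convexHull ℝ _ (subset_balancedHull ℝ (Or.inr ⟨n, rfl⟩)))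
  have hBB₂ : B ⊆ B₂ := fun z hz =>
    subset_closure (subset_convexHull ℝ _ (subset_balancedHull ℝ (Or.inl hz)))
  have h0B₂ : (0:E) ∈ B₂ := by
    have := hB₂bal.smul_mem (a := (0:ℝ)) (by simp) (hyB₂ 0)
    simpa using this
  have hsmall : ∀ ε : ℝ, 0 < ε → ∃ N : ℕ, ∀ n ≥ N, y n ∈ ε • B₂ := by
    intro ε hε
    obtain ⟨N, hN⟩ := auxEv hcto ε hε
    refine ⟨N, fun n hn => ?_⟩
    have hlim : Tendsto (fun m => x n - x m) atTop (𝓝 (y n)) := tendsto_const_nhds.sub hl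
    have hclosed : IsClosed (ε • B₂) := hB₂cl.smul_of_ne_zero hε.ne'
    apply hclosed.mem_of_tendsto hlim
    filter_upwards [eventually_ge_atTop N] with m hm
    have h2 : c n m • B ⊆ ε • B₂ := by
      have h3 : c n m • B ⊆ c n m • B₂ := Set.smul_set_mono hBB₂
      have h4 : c n m • B₂ ⊆ ε • B₂ := by
        apply hB₂bal.smul_mono
        rw [Real.norm_eq_abs, Real.norm_eq_abs, abs_of_nonneg (hc0 n m), abs_of_pos hε]
        exact (hN n hn m hm).le
      exact h3.trans h4
    exact h2 (hmem n m)
  -- the ℓ¹ ball with pointwise topology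
  set S : Set (ℕ → ℝ) := {t | ∀ F : Finset ℕ, ∑ i ∈ F, |t i| ≤ 1} with hS
  have hSsummable : ∀ t ∈ S, Summable (fun n => |t n|) := fun t ht =>
    summable_of_sum_range_le (fun n => abs_nonneg _) (fun n => ht (Finset.range n))
  set τ : (ℕ → ℝ) → ℕ → ℝ := fun t j => ∑' k, |t (k + j)| with hτ
  have hτ0 : ∀ t j, 0 ≤ τ t j := fun t j => tsum_nonneg (fun k => abs_nonneg _)
  have hτtend : ∀ t : ℕ → ℝ, Tendsto (τ t) atTop (𝓝 0) := fun t =>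
    tendsto_sum_nat_add (fun n => |t n|)
  set P : (ℕ → ℝ) → ℕ → E := fun t m => ∑ n ∈ Finset.range m, t n • y n with hP
  have hIco : ∀ t ∈ S, ∀ j m : ℕ, ∑ k ∈ Finset.Ico j m, |t k| ≤ τ t j := by
    intro t ht j m
    rw [Finset.sum_Ico_eq_sum_range]
    have hsum : Summable (fun k => |t (k + j)|) := (summable_nat_add_iff j).2 (hSsummable t ht)
    calc ∑ i ∈ Finset.range (m - j), |t (j + i)|
        = ∑ i ∈ Finset.range (m - j), |t (i + j)| :=
          Finset.sum_congr rfl fun i _ => by rw [add_comm]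
      _ ≤ τ t j := Summable.sum_le_tsum _ (fun k _ => abs_nonneg _) hsum
  have hPdiff : ∀ t ∈ S, ∀ n m : ℕ, P t n - P t m ∈ τ t (min n m) • B₂ := by
    intro t ht n m
    have key : ∀ a b : ℕ, a ≤ b → P t b - P t a ∈ τ t a • B₂ := by
      intro a b hab
      have heq : P t b - P t a = ∑ k ∈ Finset.Ico a b, t k • y k :=
        (Finset.sum_Ico_eq_sub _ hab).symm
      rw [heq]
      exact auxSumMem hB₂conv hB₂bal h0B₂ _ _ _ (fun k _ => hyB₂ k) (hIco t ht a b)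
    rcases le_total m n with h | h
    · have := key m n h
      rwa [min_eq_right h]
    · have h1 := key n m h
      rw [min_eq_left h, show P t n - P t m = -(P t m - P t n) by abel]
      exact ((Balanced.smul _ hB₂bal).neg_mem_iff).2 h1
  have hΨex : ∀ t ∈ S, ∃ z : E, Tendsto (P t) atTop (𝓝 z) := by
    intro t ht
    apply hMC
    exact ⟨B₂, fun n m => τ t (min n m), hB₂bdd, hB₂conv, hB₂bal,
      fun n m => hτ0 t _, (hτtend t).comp tendstoMinAux, fun n m => hPdiff t ht n m⟩
  set Ψ : (ℕ → ℝ) → E := fun t =>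
    if h : ∃ z, Tendsto (P t) atTop (𝓝 z) then h.choose else 0 with hΨdef
  have hΨ : ∀ t ∈ S, Tendsto (P t) atTop (𝓝 (Ψ t)) := by
    intro t ht
    have h := hΨex t ht
    simp only [hΨdef, dif_pos h]
    exact h.choose_spec
  -- uniform tail estimate
  have htail : ∀ ε : ℝ, 0 < ε → ∃ N₀ : ℕ, ∀ t ∈ S, ∀ N ≥ N₀, Ψ t - P t N ∈ ε • B₂ := by
    intro ε hε
    obtain ⟨N₀, hN₀⟩ := hsmall ε hε
    refine ⟨N₀, fun t ht N hN => ?_⟩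
    have hclosed : IsClosed (ε • B₂) := hB₂cl.smul_of_ne_zero hε.ne'
    have hlim : Tendsto (fun m => P t m - P t N) atTop (𝓝 (Ψ t - P t N)) :=
      (hΨ t ht).sub tendsto_const_nhds
    apply hclosed.mem_of_tendsto hlim
    filter_upwards [eventually_ge_atTop N] with m hm
    have heq : P t m - P t N = ∑ k ∈ Finset.Ico N m, t k • y k :=
      (Finset.sum_Ico_eq_sub _ hm).symm
    rw [heq]
    have h1 := auxSumMem (hB₂conv.smul ε) (Balanced.smul ε hB₂bal)
      (⟨0, h0B₂, smul_zero ε⟩ : (0:E) ∈ ε • B₂) (Finset.Ico N m) t y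
      (fun k hk => hN₀ k (le_trans hN (Finset.mem_Ico.1 hk).1)) (c := 1) (ht _)
    rwa [one_smul] at h1
  -- continuity of Ψ on S
  have hΨcont : ContinuousOn Ψ S := by
    intro t₀ ht₀
    have key : Tendsto (fun t => Ψ t - Ψ t₀) (𝓝[S] t₀) (𝓝 0) := by
      rw [Filter.tendsto_def]
      intro U hU
      obtain ⟨V, hV, hVU⟩ := exists_nhds_zero_quarter hU
      obtain ⟨r, hr⟩ := absorbs_iff_norm.1 (hB₂bdd hV)
      set a : ℝ := max r 1 with ha
      have ha0 : (0:ℝ) < a := lt_of_lt_of_le one_pos (le_max_right _ _)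
      have hBa : B₂ ⊆ a • V :=
        hr a (by rw [Real.norm_eq_abs, abs_of_pos ha0]; exact le_max_left _ _)
      have hεV : a⁻¹ • B₂ ⊆ V := by
        rintro z ⟨w, hw, rfl⟩
        obtain ⟨v, hv, rfl⟩ := hBa hw
        show a⁻¹ • a • v ∈ V
        rw [smul_smul, inv_mul_cancel₀ ha0.ne', one_smul]
        exact hv
      obtain ⟨N₀, hN₀⟩ := htail a⁻¹ (by positivity)
      have hScont : Continuous (fun t : ℕ → ℝ => P t N₀) := by
        apply continuous_finset_sum
        intro n _
        exact (continuous_apply n).smul continuous_const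
      have hnb : {t : ℕ → ℝ | P t N₀ - P t₀ N₀ ∈ V} ∈ 𝓝 t₀ := by
        have hcont2 : Continuous (fun t : ℕ → ℝ => P t N₀ - P t₀ N₀) :=
          hScont.sub continuous_const
        have := hcont2.continuousAt (x := t₀)
        rw [ContinuousAt] at this
        have h0 : P t₀ N₀ - P t₀ N₀ = (0:E) := sub_self _
        rw [h0] at this
        exact this hV
      apply Filter.mem_of_superset
        (Filter.inter_mem (mem_nhdsWithin_of_mem_nhds hnb) self_mem_nhdsWithin)
      rintro t ⟨htV, htS⟩
      have h1 : Ψ t - P t N₀ ∈ V := hεV (hN₀ t htS N₀ le_rfl)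
      have h3 : P t₀ N₀ - Ψ t₀ ∈ V := by
        have h5 := hN₀ t₀ ht₀ N₀ le_rfl
        have h6 : -(Ψ t₀ - P t₀ N₀) ∈ a⁻¹ • B₂ :=
          ((Balanced.smul _ hB₂bal).neg_mem_iff).2 h5
        rw [neg_sub] at h6
        exact hεV h6
      have h4 : (0:E) ∈ V := mem_of_mem_nhds hV
      have h7 := hVU h1 htV h3 h4
      have h8 : (Ψ t - P t N₀) + (P t N₀ - P t₀ N₀) + (P t₀ N₀ - Ψ t₀) + 0
          = Ψ t - Ψ t₀ := by abel
      rw [h8] at h7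
      exact h7
    have h9 : Tendsto (fun t => (Ψ t - Ψ t₀) + Ψ t₀) (𝓝[S] t₀) (𝓝 (0 + Ψ t₀)) :=
      key.add tendsto_const_nhds
    have : ContinuousWithinAt Ψ S t₀ := by
      rw [ContinuousWithinAt]
      simpa using h9
    exact this
  -- compactness of S
  have hSclosed : IsClosed S := by
    have hSeq : S = ⋂ F : Finset ℕ, {t : ℕ → ℝ | ∑ i ∈ F, |t i| ≤ 1} := by
      ext t; simp [hS, Set.mem_iInter]
    rw [hSeq]
    apply isClosed_iInter
    intro F
    have hf : Continuous fun t : ℕ → ℝ => ∑ i ∈ F, |t i| :=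
      continuous_finset_sum _ (fun i _ => (continuous_apply i).abs)
    exact isClosed_le hf continuous_const
  have hSsub : S ⊆ Set.pi Set.univ (fun _ : ℕ => Set.Icc (-1:ℝ) 1) := by
    intro t ht
    rw [Set.mem_univ_pi]
    intro n
    have h1 := ht {n}
    simp only [Finset.sum_singleton] at h1
    exact Set.mem_Icc.2 ⟨(abs_le.1 h1).1, (abs_le.1 h1).2⟩
  have hScompact : IsCompact S :=
    IsCompact.of_isClosed_subset (isCompact_univ_pi fun _ => isCompact_Icc) hSclosed hSsub
  -- the compact superset K
  set K : Set E := (fun p : ℝ × (ℕ → ℝ) => p.1 • l + Ψ p.2) '' (Set.Icc (-1:ℝ) 1 ×ˢ S)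
    with hK
  have hKcomp : IsCompact K := by
    apply IsCompact.image_of_continuousOn (isCompact_Icc.prod hScompact)
    apply ContinuousOn.add
    · exact (continuous_fst.smul continuous_const).continuousOn
    · exact hΨcont.comp continuous_snd.continuousOn (fun p hp => hp.2)
  have hsub : convexHull ℝ (balancedHull ℝ (Set.range x)) ⊆ K := by
    intro z hz
    rw [convexHull_eq] at hz
    obtain ⟨ι, F, w, v, hw0, hw1, hvmem, hcm⟩ := hz
    have hchoice : ∀ i : ι, ∃ (ri : ℝ) (ni : ℕ), i ∈ F → (|ri| ≤ 1 ∧ v i = ri • x ni) := by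
      intro i
      by_cases hi : i ∈ F
      · obtain ⟨r, hrle, u, hu, huv⟩ := mem_balancedHull_iff.1 (hvmem i hi)
        obtain ⟨n, rfl⟩ := hu
        exact ⟨r, n, fun _ => ⟨by rwa [Real.norm_eq_abs] at hrle, huv.symm⟩⟩
      · exact ⟨0, 0, fun h => absurd h hi⟩
    choose r g hrg using hchoice
    set t : ℕ → ℝ := fun n => ∑ i ∈ F.filter (fun i => g i = n), w i * r i with ht
    set G : Finset ℕ := F.image g with hG
    have htzero : ∀ n ∉ G, t n = 0 := by
      intro n hn
      have hemp : F.filter (fun i => g i = n) = ∅ := by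
        rw [Finset.filter_eq_empty_iff]
        intro i hi hgi
        exact hn (Finset.mem_image.2 ⟨i, hi, hgi⟩)
      simp [ht, hemp]
    have htS : t ∈ S := by
      intro H
      have hbound : ∀ n, |t n| ≤ ∑ i ∈ F.filter (fun i => g i = n), w i := by
        intro n
        calc |t n| ≤ ∑ i ∈ F.filter (fun i => g i = n), |w i * r i| :=
              Finset.abs_sum_le_sum_abs _ _
          _ ≤ ∑ i ∈ F.filter (fun i => g i = n), w i := by
              apply Finset.sum_le_sum
              intro i hi
              have hiF := (Finset.mem_filter.1 hi).1
              rw [abs_mul, abs_of_nonneg (hw0 i hiF)]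
              calc w i * |r i| ≤ w i * 1 :=
                    mul_le_mul_of_nonneg_left (hrg i hiF).1 (hw0 i hiF)
                _ = w i := mul_one _
      calc ∑ n ∈ H, |t n| ≤ ∑ n ∈ H, ∑ i ∈ F.filter (fun i => g i = n), w i :=
            Finset.sum_le_sum (fun n _ => hbound n)
        _ = ∑ i ∈ F.filter (fun i => g i ∈ H), w i :=
            Finset.sum_fiberwise_eq_sum_filter F H g w
        _ ≤ ∑ i ∈ F, w i :=
            Finset.sum_le_sum_of_subset_of_nonneg (Finset.filter_subset _ _)
              (fun i hi _ => hw0 i hi)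
        _ = 1 := hw1
    have hz1 : z = ∑ i ∈ F, (w i * r i) • x (g i) := by
      rw [← hcm, Finset.centerMass_eq_of_sum_1 _ _ hw1]
      apply Finset.sum_congr rfl
      intro i hi
      rw [(hrg i hi).2, smul_smul]
    have hz2 : z = ∑ n ∈ G, t n • x n := by
      rw [hz1, ← Finset.sum_fiberwise_of_maps_to
        (fun i hi => Finset.mem_image_of_mem g hi) (fun i => (w i * r i) • x (g i))]
      apply Finset.sum_congr rfl
      intro n _
      rw [ht]
      simp only []
      rw [Finset.sum_smul]
      apply Finset.sum_congr rfl
      intro i hi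
      rw [(Finset.mem_filter.1 hi).2]
    set s₀ : ℝ := ∑ n ∈ G, t n with hs₀
    have hz3 : z = s₀ • l + ∑ n ∈ G, t n • y n := by
      rw [hz2, hs₀, Finset.sum_smul, ← Finset.sum_add_distrib]
      apply Finset.sum_congr rfl
      intro n _
      have : y n = x n - l := rfl
      rw [this, smul_sub]
      abel
    have hΨt : Ψ t = ∑ n ∈ G, t n • y n := by
      have hconst : ∀ m, (∀ n ∈ G, n < m) → P t m = ∑ n ∈ G, t n • y n := by
        intro m hmG
        symm
        apply Finset.sum_subset
        · intro n hn; exact Finset.mem_range.2 (hmG n hn)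
        · intro n _ hn; rw [htzero n hn, zero_smul]
      have hlim : Tendsto (P t) atTop (𝓝 (∑ n ∈ G, t n • y n)) := by
        apply tendsto_atTop_of_eventually_const (i₀ := G.sup id + 1)
        intro m hm
        apply hconst
        intro n hn
        exact lt_of_le_of_lt (Finset.le_sup (f := id) hn)
          (lt_of_lt_of_le (Nat.lt_succ_self _) hm)
      exact tendsto_nhds_unique (hΨ t htS) hlim
    have hs₀mem : s₀ ∈ Set.Icc (-1:ℝ) 1 := by
      have habs : |s₀| ≤ 1 := le_trans (Finset.abs_sum_le_sum_abs _ _) (htS G)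
      exact Set.mem_Icc.2 ⟨(abs_le.1 habs).1, (abs_le.1 habs).2⟩
    refine ⟨(s₀, t), ⟨hs₀mem, htS⟩, ?_⟩
    show s₀ • l + Ψ t = z
    rw [hΨt, hz3]
  exact IsCompact.of_isClosed_subset hKcomp isClosed_closure
    (closure_minimal hsub hKcomp.isClosed)




end AuxMackey

/-- A Hausdorff locally convex space `E` over `ℝ` is Mackey-complete iff for
every Mackey-Cauchy sequence the closed absolutely convex hull of its range is complete. -/
theorem mackeyComplete_iff_isComplete_closedAbsConvexHull
    (E : Type*) [AddCommGroup E] [Module ℝ E] [UniformSpace E] [IsUniformAddGroup E]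
    [ContinuousSMul ℝ E] [LocallyConvexSpace ℝ E] [T2Space E] :
    MackeyComplete E ↔
      ∀ x : ℕ → E, MackeyCauchy E x →
        IsComplete (closure (convexHull ℝ (balancedHull ℝ (Set.range x)))) := by
  constructor
  · intro hMC x hx
    exact (auxForward hMC x hx).isComplete
  · intro h x hx
    exact auxBackward (h x hx) hx
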